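/- Let k ≥ 2 and n = 2k. Then the radio number of C_n □ C_n equals ((n² − 2)/2)·(k + 2) + 2. -/

import Mathlib

open SimpleGraph
open Fin.CommRing

/-- `c` is a radio labeling of `G`: labels are positive integers and for every two
distinct vertices `u, v` we have `d(u,v) + |c(u) - c(v)| ≥ 1 + diam(G)`. -/
def IsRadioLabeling {V : Type*} (G : SimpleGraph V) (c : V → ℕ) : Prop :=
  (∀ v, 1 ≤ c v) ∧
    ∀ u v : V, u ≠ v → G.diam + 1 ≤ G.dist u v + Nat.dist (c u) (c v)

/-- The span of a labeling: the maximum label used. -/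
def labelSpan {V : Type*} [Fintype V] (c : V → ℕ) : ℕ := Finset.univ.sup c

/-- The radio number of `G`: the minimum span over all radio labelings. -/
noncomputable def radioNumber {V : Type*} [Fintype V] (G : SimpleGraph V) : ℕ :=
  sInf {s | ∃ c : V → ℕ, IsRadioLabeling G c ∧ labelSpan c = s}


theorem natCast_mod_fin (n : ℕ) [NeZero n] (a : ℕ) : ((a % n : ℕ) : Fin n) = a := by
  apply Fin.val_injective
  rw [Fin.val_natCast, Fin.val_natCast]; exact Nat.mod_mod_of_dvd a dvd_rfl

theorem neg_val_fin (n : ℕ) [NeZero n] (y : Fin n) : (-y).val = (n - y.val) % n := by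
  simp [Fin.neg_def]

/-- `mm y = min y.val (-y).val`, the cycle-distance from 0 to `y`. -/
def mm {n : ℕ} [NeZero n] (y : Fin n) : ℕ := min y.val (-y).val

theorem mm_neg {n : ℕ} [NeZero n] (y : Fin n) : mm (-y) = mm y := by
  simp [mm, min_comm]

theorem mm_add_one {n : ℕ} [NeZero n] (h2 : 2 ≤ n) (y : Fin n) : mm (y + 1) ≤ mm y + 1 := by
  have ha : y.val < n := y.isLt
  have hv1 : ((1 : Fin n)).val = 1 := by rw [Fin.val_one']; exact Nat.mod_eq_of_lt h2
  have hadd : (y + 1).val = (y.val + 1) % n := by rw [Fin.add_def, hv1]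
  unfold mm
  rw [neg_val_fin, neg_val_fin, hadd]
  by_cases hae : y.val + 1 = n
  · rw [hae]; simp
  · have h1 : (y.val + 1) % n = y.val + 1 := Nat.mod_eq_of_lt (by omega)
    rw [h1]
    have h2' : (n - (y.val + 1)) % n = n - (y.val + 1) := Nat.mod_eq_of_lt (by omega)
    rw [h2']
    by_cases hy0 : y.val = 0
    · rw [hy0, Nat.sub_zero, Nat.mod_self]
      omega
    · have h3 : (n - y.val) % n = n - y.val := Nat.mod_eq_of_lt (by omega)
      rw [h3]; omega

theorem mm_sub_one {n : ℕ} [NeZero n] (h2 : 2 ≤ n) (y : Fin n) : mm (y - 1) ≤ mm y + 1 := by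
  have : y - 1 = -(-y + 1) := by ring
  rw [this, mm_neg]
  calc mm (-y + 1) ≤ mm (-y) + 1 := mm_add_one h2 _
    _ = mm y + 1 := by rw [mm_neg]

theorem cycleGraph_connected' {n : ℕ} (h : 1 ≤ n) : (cycleGraph n).Connected := by
  cases n with
  | zero => omega
  | succ m => exact cycleGraph_connected

theorem cycle_dist_le {n : ℕ} [NeZero n] (h2 : 2 ≤ n) (u : Fin n) (m : ℕ) :
    (cycleGraph n).dist u (u + (m : Fin n)) ≤ m := by
  induction m with
  | zero => simp
  | succ m ih =>
    have hconn := cycleGraph_connected' (by omega : 1 ≤ n)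
    have hadj : (cycleGraph n).Adj (u + (m : Fin n)) (u + ((m+1 : ℕ) : Fin n)) := by
      rw [cycleGraph_adj']
      right
      have : u + ((m+1 : ℕ) : Fin n) - (u + (m : Fin n)) = 1 := by push_cast; ring
      rw [this, Fin.val_one']; exact Nat.mod_eq_of_lt h2
    calc (cycleGraph n).dist u (u + ((m+1:ℕ) : Fin n))
        ≤ (cycleGraph n).dist u (u + (m : Fin n))
          + (cycleGraph n).dist (u + (m : Fin n)) (u + ((m+1:ℕ) : Fin n)) :=
          hconn.dist_triangle
      _ ≤ m + 1 := by
          have := (dist_eq_one_iff_adj (G := cycleGraph n)).mpr hadj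
          omega

theorem cycle_walk_ge {n : ℕ} [NeZero n] (h2 : 2 ≤ n) {u v : Fin n}
    (p : (cycleGraph n).Walk u v) : mm (v - u) ≤ p.length := by
  induction p with
  | nil => simp [mm]
  | @cons a w v hadj p ih =>
    rw [cycleGraph_adj'] at hadj
    have key : mm (v - a) ≤ mm (v - w) + 1 := by
      rcases hadj with h | h
      · -- (a - w).val = 1, so a = w + 1, v - a = (v - w) - 1
        have haw : a - w = 1 := by
          apply Fin.val_injective; rw [h, Fin.val_one']; exact (Nat.mod_eq_of_lt h2).symm
        have : v - a = (v - w) - 1 := by rw [← haw]; ring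
        rw [this]; exact mm_sub_one h2 _
      · have haw : w - a = 1 := by
          apply Fin.val_injective; rw [h, Fin.val_one']; exact (Nat.mod_eq_of_lt h2).symm
        have : v - a = (v - w) + 1 := by rw [← haw]; ring
        rw [this]; exact mm_add_one h2 _
    simp only [Walk.length_cons]
    omega

theorem cycle_dist_eq {n : ℕ} [NeZero n] (h2 : 2 ≤ n) (u v : Fin n) :
    (cycleGraph n).dist u v = mm (v - u) := by
  apply le_antisymm
  · have h1 : (cycleGraph n).dist u v ≤ (v - u).val := by
      have := cycle_dist_le h2 u (v - u).val
      rwa [Fin.cast_val_eq_self, add_sub_cancel] at this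
    have h1' : (cycleGraph n).dist u v ≤ (-(v - u)).val := by
      have := cycle_dist_le h2 v (u - v).val
      rw [Fin.cast_val_eq_self, add_sub_cancel] at this
      rw [dist_comm] at this
      have e : -(v - u) = u - v := by ring
      rw [e]; exact this
    exact le_min h1 h1'
  · obtain ⟨p, hp⟩ := (cycleGraph_connected' (by omega : 1 ≤ n)).exists_walk_length_eq_dist u v
    rw [← hp]
    exact cycle_walk_ge h2 p
theorem boxProd_walk_ge {α β : Type*} {G : SimpleGraph α} {H : SimpleGraph β}
    (hG : G.Connected) (hH : H.Connected) {x y : α × β} (w : (G □ H).Walk x y) :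
    G.dist x.1 y.1 + H.dist x.2 y.2 ≤ w.length := by
  induction w with
  | nil => simp
  | @cons a b v h p ih =>
    rw [Walk.length_cons]
    rcases boxProd_adj.mp h with ⟨h1, h2⟩ | ⟨h1, h2⟩
    · have t1 : G.dist a.1 v.1 ≤ 1 + G.dist b.1 v.1 := by
        have := hG.dist_triangle (u := a.1) (v := b.1) (w := v.1)
        have e1 : G.dist a.1 b.1 = 1 := dist_eq_one_iff_adj.mpr h1
        omega
      have t2 : H.dist a.2 v.2 = H.dist b.2 v.2 := by rw [h2]
      omega
    · have t1 : H.dist a.2 v.2 ≤ 1 + H.dist b.2 v.2 := by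
        have := hH.dist_triangle (u := a.2) (v := b.2) (w := v.2)
        have e1 : H.dist a.2 b.2 = 1 := dist_eq_one_iff_adj.mpr h1
        omega
      have t2 : G.dist a.1 v.1 = G.dist b.1 v.1 := by rw [h2]
      omega

theorem boxProd_dist_eq {α β : Type*} {G : SimpleGraph α} {H : SimpleGraph β}
    (hG : G.Connected) (hH : H.Connected) (x y : α × β) :
    (G □ H).dist x y = G.dist x.1 y.1 + H.dist x.2 y.2 := by
  apply le_antisymm
  · obtain ⟨p, hp⟩ := hG.exists_walk_length_eq_dist x.1 y.1
    obtain ⟨q, hq⟩ := hH.exists_walk_length_eq_dist x.2 y.2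
    calc (G □ H).dist x y = (G □ H).dist (x.1, x.2) (y.1, y.2) := by simp
      _ ≤ ((p.boxProdLeft H x.2).append (q.boxProdRight G y.1)).length := dist_le _
      _ = G.dist x.1 y.1 + H.dist x.2 y.2 := by
          rw [Walk.length_append]
          unfold Walk.boxProdLeft Walk.boxProdRight
          exact congrArg₂ (· + ·) ((Walk.length_map _ _).trans hp) ((Walk.length_map _ _).trans hq)
  · obtain ⟨w, hw⟩ := (hG.boxProd hH).exists_walk_length_eq_dist x y
    rw [← hw]
    exact boxProd_walk_ge hG hH w

theorem mm_eq {n : ℕ} [NeZero n] (y : Fin n) : mm y = min y.val (n - y.val) := by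
  unfold mm; rw [neg_val_fin]
  by_cases h : y.val = 0
  · rw [h]; simp
  · rw [Nat.mod_eq_of_lt (by have := y.isLt; omega)]

theorem mm_natCast {n : ℕ} [NeZero n] (δ : ℕ) :
    mm ((δ : Fin n)) = min (δ % n) (n - δ % n) := by
  rw [mm_eq, Fin.val_natCast]

theorem mm_le_half {n k : ℕ} [NeZero n] (hn : n = 2 * k) (y : Fin n) : mm y ≤ k := by
  rw [mm_eq]; have := y.isLt; omega

theorem mm_threept {n : ℕ} [NeZero n] (a b c : Fin n) :
    mm (b - a) + mm (c - b) + mm (a - c) ≤ n := by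
  have hsum : (b - a) + (c - b) + (a - c) = 0 := by ring
  have hval : ((b-a).val + (c-b).val + (a-c).val) % n = 0 := by
    have e1 : ((b - a) + (c - b) + (a - c)).val
        = ((b-a).val + (c-b).val + (a-c).val) % n := by
      rw [Fin.val_add, Fin.val_add, Nat.mod_add_mod]
    rw [hsum] at e1
    simp at e1
    omega
  obtain ⟨m, hm⟩ := Nat.dvd_of_mod_eq_zero hval
  have hx := (b-a).isLt; have hy := (c-b).isLt; have hz := (a-c).isLt
  have hm3 : m < 3 := by
    by_contra hc
    push_neg at hc
    have : n * 3 ≤ n * m := Nat.mul_le_mul_left n hc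
    have hn0 : 0 < n := Nat.pos_of_ne_zero (NeZero.ne n)
    omega
  rw [mm_eq, mm_eq, mm_eq]
  interval_cases m <;> omega

theorem torus_dist {n : ℕ} [NeZero n] (h2 : 2 ≤ n) (u v : Fin n × Fin n) :
    (cycleGraph n □ cycleGraph n).dist u v = mm (v.1 - u.1) + mm (v.2 - u.2) := by
  rw [boxProd_dist_eq (cycleGraph_connected' (by omega)) (cycleGraph_connected' (by omega)),
    cycle_dist_eq h2, cycle_dist_eq h2]

theorem torus_threept {n : ℕ} [NeZero n] (h2 : 2 ≤ n) (u v w : Fin n × Fin n) :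
    (cycleGraph n □ cycleGraph n).dist u v + (cycleGraph n □ cycleGraph n).dist v w
      + (cycleGraph n □ cycleGraph n).dist w u ≤ 2 * n := by
  rw [torus_dist h2, torus_dist h2, torus_dist h2]
  have a1 := mm_threept u.1 v.1 w.1
  have a2 := mm_threept u.2 v.2 w.2
  omega

theorem torus_dist_le {n k : ℕ} [NeZero n] (h2 : 2 ≤ n) (hn : n = 2 * k)
    (u v : Fin n × Fin n) : (cycleGraph n □ cycleGraph n).dist u v ≤ 2 * k := by
  rw [torus_dist h2]
  have := mm_le_half hn (v.1 - u.1)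
  have := mm_le_half hn (v.2 - u.2)
  omega

theorem torus_diam {n k : ℕ} [NeZero n] (hk : 1 ≤ k) (hn : n = 2 * k) :
    (cycleGraph n □ cycleGraph n).diam = 2 * k := by
  have h2 : 2 ≤ n := by omega
  have hconn : (cycleGraph n □ cycleGraph n).Connected :=
    (cycleGraph_connected' (by omega)).boxProd (cycleGraph_connected' (by omega))
  have hed : ∀ u v : Fin n × Fin n, (cycleGraph n □ cycleGraph n).edist u v
      = ((cycleGraph n □ cycleGraph n).dist u v : ℕ∞) := by
    intro u v
    have hne : (cycleGraph n □ cycleGraph n).edist u v ≠ ⊤ :=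
      edist_ne_top_iff_reachable.mpr (hconn.preconnected u v)
    rw [SimpleGraph.dist]
    exact (ENat.coe_toNat hne).symm
  have hediam : (cycleGraph n □ cycleGraph n).ediam = ((2 * k : ℕ) : ℕ∞) := by
    apply le_antisymm
    · apply ediam_le_of_edist_le
      intro u v
      rw [hed]
      exact_mod_cast torus_dist_le h2 hn u v
    · have hpt : (cycleGraph n □ cycleGraph n).dist ((0 : Fin n), (0 : Fin n)) ((k : Fin n), (k : Fin n)) = 2 * k := by
        rw [torus_dist h2]
        simp only [sub_zero]
        rw [mm_natCast]
        have hkn : k % n = k := Nat.mod_eq_of_lt (by omega)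
        rw [hkn]
        omega
      calc ((2 * k : ℕ) : ℕ∞) = (cycleGraph n □ cycleGraph n).edist (0, 0) ((k : Fin n), (k : Fin n)) := by
            rw [hed, hpt]
        _ ≤ _ := edist_le_ediam
  rw [SimpleGraph.diam, hediam]
  exact ENat.toNat_coe _

section LB

variable {n k : ℕ} [NeZero n]

theorem radio_lower_bound (hk : 2 ≤ k) (hn : n = 2 * k)
    (hdiam : (cycleGraph n □ cycleGraph n).diam = 2 * k)
    (hthree : ∀ u v w : Fin n × Fin n,
      (cycleGraph n □ cycleGraph n).dist u v + (cycleGraph n □ cycleGraph n).dist v w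
        + (cycleGraph n □ cycleGraph n).dist w u ≤ 4 * k)
    (hdle : ∀ u v : Fin n × Fin n, (cycleGraph n □ cycleGraph n).dist u v ≤ 2 * k)
    (c : Fin n × Fin n → ℕ)
    (hc : IsRadioLabeling (cycleGraph n □ cycleGraph n) c) :
    (2 * k ^ 2 - 1) * (k + 2) + 2 ≤ labelSpan c := by
  obtain ⟨hpos, hcond⟩ := hc
  rw [hdiam] at hcond
  have hinj : Function.Injective c := by
    intro u v h
    by_contra hne
    have h1 := hcond u v hne
    have h2 := hdle u v
    rw [h, Nat.dist_self] at h1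
    omega
  have hNN : (Finset.univ.image c).card = n * n := by
    rw [Finset.card_image_of_injective _ hinj, Finset.card_univ]
    simp [Fintype.card_prod]
  let σ := (Finset.univ.image c).orderIsoOfFin hNN
  have hmem : ∀ i : Fin (n * n), ∃ a : Fin n × Fin n, c a = (σ i : ℕ) := by
    intro i
    have h := (σ i).2
    rw [Finset.mem_image] at h
    obtain ⟨a, _, ha⟩ := h
    exact ⟨a, ha⟩
  set x : Fin (n * n) → Fin n × Fin n := fun i => (hmem i).choose with hxdef
  have hxc : ∀ i, c (x i) = (σ i : ℕ) := fun i => (hmem i).choose_spec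
  have hlt : ∀ i j : Fin (n * n), i < j → c (x i) < c (x j) := by
    intro i j hij
    rw [hxc, hxc]
    exact_mod_cast σ.strictMono hij
  have hne : ∀ i j : Fin (n * n), i ≠ j → x i ≠ x j := by
    intro i j hij hxx
    rcases lt_or_gt_of_ne hij with h | h
    · have := hlt i j h; rw [hxx] at this; omega
    · have := hlt j i h; rw [hxx] at this; omega
  have hn2 : n * n = 4 * k ^ 2 := by subst hn; ring
  -- consecutive pair inequality
  have key2 : ∀ i : ℕ, ∀ h : i + 2 < n * n,
      c (x ⟨i, by omega⟩) + (k + 2) ≤ c (x ⟨i + 2, h⟩) := by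
    intro i h
    set u := x ⟨i, by omega⟩
    set v := x ⟨i + 1, by omega⟩
    set w := x ⟨i + 2, h⟩
    have h01 : c u < c v := hlt _ _ (by simp [Fin.lt_def])
    have h12 : c v < c w := hlt _ _ (by simp [Fin.lt_def])
    have h02 : c u < c w := by omega
    have d1 := hcond u v (fun hu => by rw [hu] at h01; omega)
    have d2 := hcond v w (fun hu => by rw [hu] at h12; omega)
    have d3 := hcond u w (fun hu => by rw [hu] at h02; omega)
    rw [Nat.dist_eq_sub_of_le h01.le] at d1
    rw [Nat.dist_eq_sub_of_le h12.le] at d2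
    rw [Nat.dist_eq_sub_of_le h02.le] at d3
    have ht := hthree u v w
    rw [dist_comm (u := w) (v := u)] at ht
    omega
  have key1 : ∀ i : ℕ, ∀ h : i + 1 < n * n,
      c (x ⟨i, by omega⟩) + 1 ≤ c (x ⟨i + 1, h⟩) := by
    intro i h
    exact hlt _ _ (by simp [Fin.lt_def])
  have main : ∀ m : ℕ, ∀ h : 2 * m < n * n, 1 + m * (k + 2) ≤ c (x ⟨2 * m, h⟩) := by
    intro m
    induction m with
    | zero => intro h; simpa using hpos _
    | succ m ih =>
      intro h
      have h2m : 2 * m + 2 < n * n := by omega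
      have := ih (by omega)
      have := key2 (2 * m) h2m
      have e : c (x ⟨2 * m + 2, h2m⟩) = c (x ⟨2 * (m + 1), h⟩) := by congr 1
      have hmul : (m + 1) * (k + 2) = m * (k + 2) + (k + 2) := by ring
      omega
  have hlast2 : 2 * (2 * k ^ 2 - 1) < n * n := by
    have : 4 ≤ k ^ 2 := by nlinarith
    omega
  have hlast1 : 2 * (2 * k ^ 2 - 1) + 1 < n * n := by
    have : 4 ≤ k ^ 2 := by nlinarith
    omega
  have hm := main (2 * k ^ 2 - 1) hlast2
  have hk1 := key1 (2 * (2 * k ^ 2 - 1)) hlast1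
  have hsup : c (x ⟨2 * (2 * k ^ 2 - 1) + 1, hlast1⟩) ≤ labelSpan c :=
    Finset.le_sup (Finset.mem_univ _)
  calc (2 * k ^ 2 - 1) * (k + 2) + 2
      ≤ c (x ⟨2 * (2 * k ^ 2 - 1) + 1, hlast1⟩) := by omega
    _ ≤ labelSpan c := hsup

end LB


/-- The Hamiltonian-path coordinate function on the cycle. -/
def Ff (k m : ℕ) : ℕ := if m % 2 = 0 then (2*k - m/2) % (2*k) else k - m/2

def xc1 (k i : ℕ) : ℕ := Ff k ((i/2) % (2*k)) + ((i/2)/(2*k)) * k + (i % 2) * k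
def xc2 (k i : ℕ) : ℕ := (i/2)/(2*k) + (i % 2) * k

def xseq (n k : ℕ) [NeZero n] (i : ℕ) : Fin n × Fin n := ((xc1 k i : Fin n), (xc2 k i : Fin n))

def lab (k i : ℕ) : ℕ := 1 + (i/2) * (k+2) + i % 2

theorem Ff_lt {k : ℕ} (hk : 1 ≤ k) (m : ℕ) (hm : m < 2*k) : Ff k m < 2*k := by
  unfold Ff
  split
  · exact Nat.mod_lt _ (by omega)
  · omega

theorem Ff_inj {k : ℕ} (hk : 1 ≤ k) {m m' : ℕ} (hm : m < 2*k) (hm' : m' < 2*k)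
    (h : Ff k m = Ff k m') : m = m' := by
  unfold Ff at h
  have e1 := Nat.div_add_mod m 2
  have e2 := Nat.div_add_mod m' 2
  have d1 : m % 2 = 0 ∨ m % 2 = 1 := by omega
  have d2 : m' % 2 = 0 ∨ m' % 2 = 1 := by omega
  have mod1 : m / 2 = 0 → (2*k - m/2) % (2*k) = 0 := by intro h0; rw [h0]; simp
  have mod1' : m / 2 ≠ 0 → (2*k - m/2) % (2*k) = 2*k - m/2 := by
    intro h0; exact Nat.mod_eq_of_lt (by omega)
  have mod2 : m' / 2 = 0 → (2*k - m'/2) % (2*k) = 0 := by intro h0; rw [h0]; simp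
  have mod2' : m' / 2 ≠ 0 → (2*k - m'/2) % (2*k) = 2*k - m'/2 := by
    intro h0; exact Nat.mod_eq_of_lt (by omega)
  rcases d1 with h1 | h1 <;> rcases d2 with h2 | h2 <;> simp [h1, h2] at h
  · by_cases hz : m / 2 = 0 <;> by_cases hz' : m' / 2 = 0
    · omega
    · rw [mod1 hz, mod2' hz'] at h; omega
    · rw [mod1' hz, mod2 hz'] at h; omega
    · rw [mod1' hz, mod2' hz'] at h; omega
  · by_cases hz : m / 2 = 0
    · rw [mod1 hz] at h; omega
    · rw [mod1' hz] at h; omega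
  · by_cases hz' : m' / 2 = 0
    · rw [mod2 hz'] at h; omega
    · rw [mod2' hz'] at h; omega
  · omega

section Steps
variable {n k : ℕ} [NeZero n]

theorem cast_two_k (hn : n = 2*k) : ((2*k : ℕ) : Fin n) = 0 := by
  subst hn; exact Fin.natCast_self _

theorem ant_step (hn : n = 2*k) (t : ℕ) :
    xseq n k (2*t+1) = ((xseq n k (2*t)).1 + ((k:ℕ) : Fin n),
      (xseq n k (2*t)).2 + ((k:ℕ) : Fin n)) := by
  unfold xseq xc1 xc2
  have h1 : (2*t+1)/2 = t := by omega
  have h2 : (2*t+1)%2 = 1 := by omega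
  have h3 : (2*t)/2 = t := by omega
  have h4 : (2*t)%2 = 0 := by omega
  rw [h1, h2, h3, h4]
  simp only [Prod.mk.injEq]
  constructor <;> · push_cast; ring

theorem base_step (hk : 2 ≤ k) (hn : n = 2*k) (t : ℕ) (ht : t + 1 < 2*k^2) :
    ∃ d1 d2 : ℕ, xseq n k (2*(t+1)) = ((xseq n k (2*t)).1 + ((d1:ℕ) : Fin n),
        (xseq n k (2*t)).2 + ((d2:ℕ) : Fin n))
      ∧ ((d1 = k ∧ d2 = 0) ∨ (d1 = k - 1 ∧ d2 = 0) ∨ (d1 = k - 1 ∧ d2 = 1)) := by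
  subst hn
  have hdm := Nat.div_add_mod t (2*k)
  set j := t / (2*k) with hj
  set m := t % (2*k) with hm
  have hmlt : m < 2*k := Nat.mod_lt _ (by omega)
  have he1 : (2*(t+1))/2 = t+1 := by omega
  have he2 : (2*(t+1))%2 = 0 := by omega
  have he3 : (2*t)/2 = t := by omega
  have he4 : (2*t)%2 = 0 := by omega
  by_cases hrow : m < 2*k - 1
  · -- within a row
    have hq : (t+1) / (2*k) = j ∧ (t+1) % (2*k) = m + 1 := by
      constructor
      · rw [show t + 1 = (m+1) + (2*k)*j by omega]
        rw [Nat.add_mul_div_left _ _ (by omega : 0 < 2*k), Nat.div_eq_of_lt (by omega)]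
        omega
      · rw [show t + 1 = (m+1) + (2*k)*j by omega]
        rw [Nat.add_mul_mod_self_left, Nat.mod_eq_of_lt (by omega)]
    have hdm2 := Nat.div_add_mod m 2
    by_cases hpar : m % 2 = 0
    · refine ⟨k, 0, ?_, Or.inl ⟨rfl, rfl⟩⟩
      unfold xseq xc1 xc2
      rw [he1, he2, he3, he4, hq.1, hq.2]
      simp only [← hj, ← hm, Prod.mk.injEq]
      have hf1 : Ff k (m+1) = k - m/2 := by
        unfold Ff
        rw [if_neg (by omega)]
        congr 1
        omega
      have hf2 : Ff k m = (2*k - m/2) % (2*k) := by unfold Ff; rw [if_pos hpar]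
      constructor
      · rw [hf1, hf2]
        conv_rhs => rw [← Nat.cast_add]
        by_cases hz : m/2 = 0
        · rw [show (2*k - m/2) % (2*k) = 0 by rw [hz, Nat.sub_zero, Nat.mod_self]]
          rw [show (0 + j*k + 0*k) + k = k - m/2 + j*k + 0*k by omega]
        · rw [show (2*k - m/2) % (2*k) = 2*k - m/2 from Nat.mod_eq_of_lt (by omega)]
          rw [show (2*k - m/2 + j*k + 0*k) + k = (k - m/2 + j*k + 0*k) + 2*k by omega]
          conv_rhs => rw [Nat.cast_add, Fin.natCast_self, add_zero]
      · push_cast; ring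
    · refine ⟨k - 1, 0, ?_, Or.inr (Or.inl ⟨rfl, rfl⟩)⟩
      unfold xseq xc1 xc2
      rw [he1, he2, he3, he4, hq.1, hq.2]
      simp only [← hj, ← hm, Prod.mk.injEq]
      have hmk : m / 2 + 1 ≤ k - 1 := by omega
      have hf1 : Ff k (m+1) = 2*k - (m/2 + 1) := by
        unfold Ff
        rw [if_pos (by omega)]
        rw [show (m+1)/2 = m/2 + 1 by omega]
        exact Nat.mod_eq_of_lt (by omega)
      have hf2 : Ff k m = k - m/2 := by unfold Ff; rw [if_neg hpar]
      constructor
      · rw [hf1, hf2]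
        conv_rhs => rw [← Nat.cast_add]
        rw [show (k - m/2 + j*k + 0*k) + (k-1) = 2*k - (m/2+1) + j*k + 0*k by omega]
      · push_cast; ring
  · -- row jump: m = 2*k - 1
    have hm' : m = 2*k - 1 := by omega
    have hjk : j + 1 ≤ k := by
      by_contra hc
      push_neg at hc
      have h1 : (2*k) * k ≤ (2*k) * j := Nat.mul_le_mul_left _ (by omega)
      have h2 : (2*k) * k = 2*k^2 := by ring
      omega
    have hq : (t+1) / (2*k) = j + 1 ∧ (t+1) % (2*k) = 0 := by
      have hexp : (2*k) * (j+1) = (2*k)*j + 2*k := by ring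
      have hts : t + 1 = (2*k) * (j+1) := by omega
      rw [hts]
      constructor
      · exact Nat.mul_div_cancel_left _ (by omega)
      · exact Nat.mul_mod_right _ _
    refine ⟨k - 1, 1, ?_, Or.inr (Or.inr ⟨rfl, rfl⟩)⟩
    unfold xseq xc1 xc2
    rw [he1, he2, he3, he4, hq.1, hq.2]
    simp only [← hj, ← hm, Prod.mk.injEq]
    rw [hm']
    have hf1 : Ff k 0 = 0 := by unfold Ff; simp
    have hf2 : Ff k (2*k-1) = 1 := by
      unfold Ff
      rw [if_neg (by omega)]
      omega
    constructor
    · rw [hf1, hf2]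
      conv_rhs => rw [← Nat.cast_add]
      rw [show (1 + j*k + 0*k) + (k-1) = 0 + (j+1)*k + 0*k by
        have : (j+1)*k = j*k + k := by ring
        omega]
    · conv_rhs => rw [← Nat.cast_add]
      rw [show (j + 0*k) + 1 = (j + 1) + 0*k by omega]

end Steps

section Upper
open SimpleGraph
variable {n k : ℕ} [NeZero n]

theorem mm_eval (hk : 2 ≤ k) (hn : n = 2*k) (d : ℕ) (hd : d ≤ 2*k) :
    mm ((d : ℕ) : Fin n) = min d (2*k - d) := by
  rw [mm_natCast, hn]
  by_cases h : d = 2*k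
  · subst h; simp
  · rw [Nat.mod_eq_of_lt (by omega)]

theorem lab_even (k t : ℕ) : lab k (2*t) = 1 + t*(k+2) := by
  unfold lab
  rw [show 2*t/2 = t by omega, show (2*t)%2 = 0 by omega]
  omega

theorem lab_odd (k t : ℕ) : lab k (2*t+1) = 1 + t*(k+2) + 1 := by
  unfold lab
  rw [show (2*t+1)/2 = t by omega, show (2*t+1)%2 = 1 by omega]

theorem dist_shift (h2 : 2 ≤ n) (u : Fin n × Fin n) (a b : Fin n) :
    (cycleGraph n □ cycleGraph n).dist u (u.1 + a, u.2 + b) = mm a + mm b := by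
  rw [torus_dist h2]
  simp

theorem neg_cast_k (hn : n = 2*k) : -((k : ℕ) : Fin n) = ((k : ℕ) : Fin n) := by
  subst hn
  have : ((k:ℕ) : Fin (2*k)) + ((k:ℕ) : Fin (2*k)) = 0 := by
    rw [← Nat.cast_add, show k + k = 2*k by ring, Fin.natCast_self]
  exact neg_eq_of_add_eq_zero_left this

theorem second_coord_inj {k : ℕ} {j e j' e' : ℕ} (hj : j < k) (hj' : j' < k)
    (he : e < 2) (he' : e' < 2) (hv : j + e*k = j' + e'*k) : j = j' ∧ e = e' := by
  rcases (by omega : e = 0 ∨ e = 1) with rfl | rfl <;>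
    rcases (by omega : e' = 0 ∨ e' = 1) with rfl | rfl <;>
    · constructor <;> omega

theorem xseq_inj (hk : 2 ≤ k) (hn : n = 2*k) {i i' : ℕ} (hi : i < n*n) (hi' : i' < n*n)
    (h : xseq n k i = xseq n k i') : i = i' := by
  subst hn
  have hs : 2*k*(2*k) = 4*k^2 := by ring
  have hkk : k*(2*k) = 2*k^2 := by ring
  obtain ⟨t, e, rfl, het⟩ : ∃ t e, i = 2*t + e ∧ e < 2 := ⟨i/2, i%2, by omega, by omega⟩
  obtain ⟨t', e', rfl, het'⟩ : ∃ t' e', i' = 2*t' + e' ∧ e' < 2 :=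
    ⟨i'/2, i'%2, by omega, by omega⟩
  obtain ⟨h1, h2⟩ := Prod.ext_iff.mp h
  dsimp only [xseq, xc1, xc2] at h1 h2
  rw [show (2*t+e)/2 = t by omega, show (2*t+e)%2 = e by omega,
    show (2*t'+e')/2 = t' by omega, show (2*t'+e')%2 = e' by omega] at h1 h2
  have hdmt := Nat.div_add_mod t (2*k)
  have hdmt' := Nat.div_add_mod t' (2*k)
  have hjlt : t/(2*k) < k := by
    rw [Nat.div_lt_iff_lt_mul (by omega : 0 < 2*k)]
    omega
  have hjlt' : t'/(2*k) < k := by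
    rw [Nat.div_lt_iff_lt_mul (by omega : 0 < 2*k)]
    omega
  have hmlt : t % (2*k) < 2*k := Nat.mod_lt _ (by omega)
  have hmlt' : t' % (2*k) < 2*k := Nat.mod_lt _ (by omega)
  have hek : e*k ≤ k := by
    calc e*k ≤ 1*k := Nat.mul_le_mul_right k (by omega)
    _ = k := one_mul k
  have hek' : e'*k ≤ k := by
    calc e'*k ≤ 1*k := Nat.mul_le_mul_right k (by omega)
    _ = k := one_mul k
  have hv2 := congrArg Fin.val h2
  rw [Fin.val_natCast, Fin.val_natCast, Nat.mod_eq_of_lt (by omega),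
    Nat.mod_eq_of_lt (by omega)] at hv2
  obtain ⟨hjj, hee⟩ := second_coord_inj hjlt hjlt' het het' hv2
  rw [hjj, hee] at h1
  push_cast at h1
  have hF : ((Ff k (t % (2*k)) : ℕ) : Fin (2*k)) = ((Ff k (t' % (2*k)) : ℕ) : Fin (2*k)) :=
    add_right_cancel (add_right_cancel h1)
  have hFv := congrArg Fin.val hF
  rw [Fin.val_natCast, Fin.val_natCast,
    Nat.mod_eq_of_lt (Ff_lt (by omega) _ hmlt),
    Nat.mod_eq_of_lt (Ff_lt (by omega) _ hmlt')] at hFv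
  have hmeq : t % (2*k) = t' % (2*k) := Ff_inj (by omega) hmlt hmlt' hFv
  rw [hjj, hmeq] at hdmt
  omega

theorem pair_cond (hk : 2 ≤ k) (hn : n = 2*k) {i j : ℕ} (hij : i < j) (hjlt : j < n*n) :
    lab k i < lab k j ∧
      2*k + 1 ≤ (cycleGraph n □ cycleGraph n).dist (xseq n k i) (xseq n k j)
        + (lab k j - lab k i) := by
  have h2 : 2 ≤ n := by omega
  have hnn : n*n = 4*k^2 := by rw [hn]; ring
  obtain ⟨t, e, rfl, het⟩ : ∃ t e, i = 2*t + e ∧ e < 2 := ⟨i/2, i%2, by omega, by omega⟩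
  obtain ⟨t', e', rfl, het'⟩ : ∃ t' e', j = 2*t' + e' ∧ e' < 2 :=
    ⟨j/2, j%2, by omega, by omega⟩
  have hlab : ∀ s u : ℕ, u < 2 → lab k (2*s + u) = 1 + s*(k+2) + u := by
    intro s u hu
    unfold lab
    rw [show (2*s+u)/2 = s by omega, show (2*s+u)%2 = u by omega]
  rw [hlab t e het, hlab t' e' het']
  have htt' : t ≤ t' := by omega
  rcases Nat.lt_or_ge t' (t+2) with hc | hc
  case inr =>
    have hmul : (t+2)*(k+2) ≤ t'*(k+2) := Nat.mul_le_mul_right _ hc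
    have hexp : (t+2)*(k+2) = t*(k+2) + 2*(k+2) := by ring
    exact ⟨by omega, by omega⟩
  case inl =>
  rcases Nat.eq_or_lt_of_le htt' with hc2 | hc2
  · -- same t: antipodal pair
    subst hc2
    have he0 : e = 0 := by omega
    have he1 : e' = 1 := by omega
    subst he0; subst he1
    rw [show 2*t+0 = 2*t by ring]
    rw [ant_step hn t, dist_shift h2]
    have hmk : mm ((k:ℕ) : Fin n) = k := by rw [mm_eval hk hn k (by omega)]; omega
    rw [hmk]
    omega
  · -- t' = t+1
    have ht1 : t' = t + 1 := by omega
    subst ht1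
    obtain ⟨d1, d2, hQ, hd⟩ := base_step hk hn t (by omega)
    have hant := ant_step hn t
    have hant' := ant_step hn (t+1)
    have hd1le : d1 ≤ 2*k ∧ d2 ≤ 2*k := by rcases hd with ⟨a,b⟩|⟨a,b⟩|⟨a,b⟩ <;> omega
    have hexp : (t+1)*(k+2) = t*(k+2) + (k+2) := by ring
    have hmmd1 : mm ((d1:ℕ) : Fin n) = min d1 (2*k - d1) := mm_eval hk hn d1 hd1le.1
    have hmmd2 : mm ((d2:ℕ) : Fin n) = min d2 (2*k - d2) := mm_eval hk hn d2 hd1le.2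
    have hmmd1k : mm (((d1:ℕ) : Fin n) + ((k:ℕ) : Fin n)) = min (d1+k) (2*k - (d1+k)) := by
      rw [← Nat.cast_add]
      exact mm_eval hk hn (d1+k) (by omega)
    have hmmd2k : mm (((d2:ℕ) : Fin n) + ((k:ℕ) : Fin n)) = min (d2+k) (2*k - (d2+k)) := by
      rw [← Nat.cast_add]
      exact mm_eval hk hn (d2+k) (by omega)
    rcases (by omega : e = 0 ∨ e = 1) with rfl | rfl <;>
      rcases (by omega : e' = 0 ∨ e' = 1) with rfl | rfl
    · -- (0,0)
      rw [show 2*t+0 = 2*t by ring, show 2*(t+1)+0 = 2*(t+1) by ring, hQ, dist_shift h2,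
        hmmd1, hmmd2]
      rcases hd with ⟨a,b⟩|⟨a,b⟩|⟨a,b⟩ <;> subst a <;> subst b <;> exact ⟨by omega, by omega⟩
    · -- (0,1)
      rw [show 2*t+0 = 2*t by ring, show 2*(t+1)+1 = 2*(t+1)+1 by ring, hant', hQ]
      rw [show ((xseq n k (2*t)).1 + ((d1:ℕ):Fin n) + ((k:ℕ):Fin n),
          (xseq n k (2*t)).2 + ((d2:ℕ):Fin n) + ((k:ℕ):Fin n))
        = ((xseq n k (2*t)).1 + (((d1:ℕ):Fin n) + ((k:ℕ):Fin n)),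
          (xseq n k (2*t)).2 + (((d2:ℕ):Fin n) + ((k:ℕ):Fin n))) by rw [add_assoc, add_assoc]]
      rw [dist_shift h2, hmmd1k, hmmd2k]
      rcases hd with ⟨a,b⟩|⟨a,b⟩|⟨a,b⟩ <;> subst a <;> subst b <;> exact ⟨by omega, by omega⟩
    · -- (1,0)
      rw [show 2*(t+1)+0 = 2*(t+1) by ring, hant, hQ]
      have hrw : ((xseq n k (2*t)).1 + ((d1:ℕ):Fin n), (xseq n k (2*t)).2 + ((d2:ℕ):Fin n))
          = ((xseq n k (2*t)).1 + ((k:ℕ):Fin n) + (((d1:ℕ):Fin n) + ((k:ℕ):Fin n)),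
            (xseq n k (2*t)).2 + ((k:ℕ):Fin n) + (((d2:ℕ):Fin n) + ((k:ℕ):Fin n))) := by
        have hkk0 : ((k:ℕ):Fin n) + ((k:ℕ):Fin n) = 0 := by
          rw [← Nat.cast_add, show k + k = 2*k by ring, ← hn]
          exact Fin.natCast_self n
        rw [Prod.mk.injEq]
        constructor <;>
        · rw [show ∀ x y z : Fin n, x + y + (z + y) = x + z + (y + y) from
            fun x y z => by ring, hkk0, add_zero]
      rw [hrw, dist_shift h2, hmmd1k, hmmd2k]
      rcases hd with ⟨a,b⟩|⟨a,b⟩|⟨a,b⟩ <;> subst a <;> subst b <;> exact ⟨by omega, by omega⟩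
    · -- (1,1)
      rw [hant, hant', hQ]
      have hrw : ((xseq n k (2*t)).1 + ((d1:ℕ):Fin n) + ((k:ℕ):Fin n),
            (xseq n k (2*t)).2 + ((d2:ℕ):Fin n) + ((k:ℕ):Fin n))
          = ((xseq n k (2*t)).1 + ((k:ℕ):Fin n) + ((d1:ℕ):Fin n),
            (xseq n k (2*t)).2 + ((k:ℕ):Fin n) + ((d2:ℕ):Fin n)) := by
        rw [Prod.mk.injEq]
        exact ⟨by ring, by ring⟩
      rw [hrw, dist_shift h2, hmmd1, hmmd2]
      rcases hd with ⟨a,b⟩|⟨a,b⟩|⟨a,b⟩ <;> subst a <;> subst b <;> exact ⟨by omega, by omega⟩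

end Upper

section Assemble
open SimpleGraph
variable {n k : ℕ} [NeZero n]

theorem lab_le (hk : 2 ≤ k) {i : ℕ} (hi : i < 4*k^2) :
    lab k i ≤ (2*k^2 - 1)*(k+2) + 2 := by
  unfold lab
  have ht : i/2 ≤ 2*k^2 - 1 := by omega
  have hmul : (i/2)*(k+2) ≤ (2*k^2-1)*(k+2) := Nat.mul_le_mul_right _ ht
  have he : i % 2 < 2 := Nat.mod_lt _ (by omega)
  omega

theorem upper_exists (hk : 2 ≤ k) (hn : n = 2*k) :
    ∃ c : Fin n × Fin n → ℕ, IsRadioLabeling (cycleGraph n □ cycleGraph n) c ∧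
      labelSpan c = (2*k^2 - 1)*(k+2) + 2 := by
  have h2 : 2 ≤ n := by omega
  have hnn : n*n = 4*k^2 := by rw [hn]; ring
  have hk2 : 4 ≤ k^2 := by nlinarith
  have hdiam : (cycleGraph n □ cycleGraph n).diam = 2*k := torus_diam (by omega) hn
  have hbij : Function.Bijective (fun i : Fin (n*n) => xseq n k i.val) := by
    rw [Fintype.bijective_iff_injective_and_card]
    constructor
    · intro a b hab
      exact Fin.val_injective (xseq_inj hk hn a.isLt b.isLt hab)
    · simp [Fintype.card_prod]
  let E := Equiv.ofBijective _ hbij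
  have heval : ∀ x : Fin (n*n), E x = xseq n k x.val := fun _ => rfl
  refine ⟨fun v => lab k (E.symm v).val, ⟨?_, ?_⟩, ?_⟩
  · intro v
    show 1 ≤ lab k (E.symm v).val
    unfold lab
    omega
  · intro u v huv
    rw [hdiam]
    show 2*k+1 ≤ (cycleGraph n □ cycleGraph n).dist u v
      + Nat.dist (lab k (E.symm u).val) (lab k (E.symm v).val)
    have hu : xseq n k (E.symm u).val = u := E.apply_symm_apply u
    have hv : xseq n k (E.symm v).val = v := E.apply_symm_apply v
    have hne : (E.symm u).val ≠ (E.symm v).val := by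
      intro hh
      apply huv
      rw [← hu, ← hv, hh]
    rcases Nat.lt_or_ge (E.symm u).val (E.symm v).val with hlt | hge
    · obtain ⟨hl, hcond⟩ := pair_cond hk hn hlt (E.symm v).isLt
      rw [hu, hv] at hcond
      have hde : Nat.dist (lab k (E.symm u).val) (lab k (E.symm v).val)
          = lab k (E.symm v).val - lab k (E.symm u).val := Nat.dist_eq_sub_of_le hl.le
      simp only [hde]
      omega
    · have hlt' : (E.symm v).val < (E.symm u).val := by omega
      obtain ⟨hl, hcond⟩ := pair_cond hk hn hlt' (E.symm u).isLt
      rw [hu, hv] at hcond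
      rw [SimpleGraph.dist_comm] at hcond
      have hde : Nat.dist (lab k (E.symm u).val) (lab k (E.symm v).val)
          = lab k (E.symm u).val - lab k (E.symm v).val := by
        rw [Nat.dist_comm]; exact Nat.dist_eq_sub_of_le hl.le
      simp only [hde]
      omega
  · apply le_antisymm
    · apply Finset.sup_le
      intro v _
      exact lab_le hk (by rw [← hnn]; exact (E.symm v).isLt)
    · have hlt : n*n - 1 < n*n := by omega
      have hwc : lab k (E.symm (E ⟨n*n-1, hlt⟩)).val = lab k (n*n - 1) := by
        rw [E.symm_apply_apply]
      calc (2*k^2-1)*(k+2) + 2 = lab k (n*n-1) := by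
            rw [show n*n - 1 = 2*(2*k^2-1) + 1 by omega, lab_odd]
            omega
        _ = lab k (E.symm (E ⟨n*n-1, hlt⟩)).val := hwc.symm
        _ ≤ Finset.univ.sup (fun v => lab k (E.symm v).val) :=
            Finset.le_sup (f := fun v => lab k (E.symm v).val)
              (Finset.mem_univ (E ⟨n*n-1, hlt⟩))

end Assemble

theorem radioNumber_even' (n k : ℕ) (hk : 2 ≤ k) (hn : n = 2 * k) :
    radioNumber (cycleGraph n □ cycleGraph n) = (n ^ 2 - 2) / 2 * (k + 2) + 2 := by
  haveI : NeZero n := ⟨by omega⟩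
  have h2 : 2 ≤ n := by omega
  have hk2 : 4 ≤ k^2 := by nlinarith
  have hn2 : n^2 = 4*k^2 := by rw [hn]; ring
  have hdiv : (n^2 - 2)/2 = 2*k^2 - 1 := by omega
  rw [hdiv]
  obtain ⟨c0, hc0, hs0⟩ := upper_exists hk hn
  apply le_antisymm
  · exact Nat.sInf_le ⟨c0, hc0, hs0⟩
  · refine le_csInf ⟨(2*k^2-1)*(k+2)+2, ⟨c0, hc0, hs0⟩⟩ ?_
    rintro s ⟨c, hc, rfl⟩
    exact radio_lower_bound hk hn (torus_diam (by omega) hn)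
      (fun u v w => by have := torus_threept h2 u v w; omega)
      (fun u v => torus_dist_le h2 hn u v) c hc

/-- for `n = 2k`, `k ≥ 2`, `rn(C_n □ C_n) = ((n² - 2)/2)(k + 2) + 2`. -/
theorem radioNumber_even (n k : ℕ) (hk : 2 ≤ k) (hn : n = 2 * k) :
    radioNumber (cycleGraph n □ cycleGraph n) = (n ^ 2 - 2) / 2 * (k + 2) + 2 :=
  radioNumber_even' n k hk hn
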